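/- Let (Ω, 𝓕, P) be a probability space and (W_i)_{i≥1} a sequence of independent, identically distributed real-valued random variables whose common law μ is symmetric (μ is invariant under x ↦ −x) and atomless (has no atoms). Set S_k := ∑_{i=1}^k W_i. Then for every natural number N ≥ 1, ∑_{k=1}^N (Nat.choose N k) · P(S_k ≥ 0) ≥ (2^N − 1) / (2N · √(π · (N − 2/3))). -/

import Mathlib

open MeasureTheory ProbabilityTheory Finset
open scoped ENNReal

lemma conv_map_neg (ν₁ ν₂ : Measure ℝ) [SFinite ν₁] [SFinite ν₂] :
    (ν₁.conv ν₂).map (fun x => -x) = (ν₁.map (fun x => -x)).conv (ν₂.map (fun x => -x)) := by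
  unfold Measure.conv
  rw [Measure.map_map (by fun_prop) (by fun_prop),
    Measure.map_prod_map _ _ measurable_neg measurable_neg,
    Measure.map_map (by fun_prop) (by fun_prop)]
  congr 1
  ext ⟨a, b⟩
  simp [Prod.map, neg_add, add_comm]

lemma sum_law_symm
    {Ω : Type*} [MeasurableSpace Ω] (P : Measure Ω) [IsProbabilityMeasure P]
    (μ : Measure ℝ)
    (hsym : μ.map (fun x => -x) = μ)
    (W : ℕ → Ω → ℝ)
    (hmeas : ∀ i, Measurable (W i))
    (hdist : ∀ i, P.map (W i) = μ)
    (hindep : iIndepFun W P)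
    (k : ℕ) :
    (P.map (fun ω => ∑ i ∈ Finset.range k, W i ω)).map (fun x => -x)
      = P.map (fun ω => ∑ i ∈ Finset.range k, W i ω) := by
  have hμprob : IsProbabilityMeasure μ := by
    rw [← hdist 0]; exact Measure.isProbabilityMeasure_map (hmeas 0).aemeasurable
  induction k with
  | zero =>
    simp only [Finset.range_zero, Finset.sum_empty]
    simp [Measure.map_const, measure_univ, Measure.map_dirac' measurable_neg]
  | succ n ih =>
    have hSmeas : Measurable (fun ω => ∑ i ∈ Finset.range n, W i ω) :=
      Finset.measurable_sum _ fun i _ => hmeas i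
    have hind : IndepFun (fun ω => ∑ i ∈ Finset.range n, W i ω) (W n) P := by
      have h := hindep.indepFun_sum_range_succ hmeas n
      rwa [show (∑ j ∈ Finset.range n, W j) = fun ω => ∑ i ∈ Finset.range n, W i ω
        from funext fun ω => by simp] at h
    have hconv : P.map (fun ω => ∑ i ∈ Finset.range (n+1), W i ω)
        = (P.map (fun ω => ∑ i ∈ Finset.range n, W i ω)).conv μ := by
      have h2 := (indepFun_iff_map_prod_eq_prod_map_map hSmeas.aemeasurable
        (hmeas n).aemeasurable).mp hind
      unfold Measure.conv
      rw [← hdist n, ← h2, Measure.map_map measurable_add (hSmeas.prodMk (hmeas n))]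
      congr 1
      ext ω
      simp [Finset.sum_range_succ]
    have : IsProbabilityMeasure (P.map (fun ω => ∑ i ∈ Finset.range n, W i ω)) :=
      Measure.isProbabilityMeasure_map hSmeas.aemeasurable
    rw [hconv, conv_map_neg, ih, hsym]


/-- **Theorem 3 of the paper, number of causal pieces in the limit.**
For iid increments `W i` with symmetric atomless common law `μ`, the expected number of
causal pieces `∑_{k=1}^N C(N,k) · P(S_k ≥ 0)` of a single nLIF neuron with `N` inputs is
at least `(2^N - 1) / (2N·√(π(N - 2/3)))`. -/
theorem causal_pieces_lower_bound
    {Ω : Type*} [MeasurableSpace Ω] (P : Measure Ω) [IsProbabilityMeasure P]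
    (μ : Measure ℝ) [NullSingletonClass μ]
    (hsym : μ.map (fun x => -x) = μ)
    (W : ℕ → Ω → ℝ)
    (hmeas : ∀ i, Measurable (W i))
    (hdist : ∀ i, P.map (W i) = μ)
    (hindep : iIndepFun W P)
    (N : ℕ) (hN : 1 ≤ N) :
    ∑ k ∈ Finset.Icc 1 N, (Nat.choose N k : ℝ) *
        (P {ω | 0 ≤ ∑ i ∈ Finset.range k, W i ω}).toReal
      ≥ (2 ^ N - 1) / (2 * N * Real.sqrt (Real.pi * (N - 2 / 3))) := by
  -- Step 1: each probability is at least 1/2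
  have key : ∀ k : ℕ, (1/2 : ℝ) ≤ (P {ω | 0 ≤ ∑ i ∈ Finset.range k, W i ω}).toReal := by
    intro k
    set S : Ω → ℝ := fun ω => ∑ i ∈ Finset.range k, W i ω with hS
    have hSmeas : Measurable S := Finset.measurable_sum _ fun i _ => hmeas i
    set ν : Measure ℝ := P.map S with hν
    have hνprob : IsProbabilityMeasure ν := Measure.isProbabilityMeasure_map hSmeas.aemeasurable
    have hνsym : ν.map (fun x => -x) = ν :=
      sum_law_symm P μ hsym W hmeas hdist hindep k
    have hA : MeasurableSet {x : ℝ | 0 ≤ x} := measurableSet_Ici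
    have hEq : P {ω | 0 ≤ S ω} = ν {x : ℝ | 0 ≤ x} := by
      rw [hν, Measure.map_apply hSmeas hA]; rfl
    have hneg : ν {x : ℝ | x ≤ 0} = ν {x : ℝ | 0 ≤ x} := by
      have hpre : {x : ℝ | x ≤ 0} = (fun x : ℝ => -x) ⁻¹' {x | 0 ≤ x} := by
        ext x; simp
      rw [hpre, ← Measure.map_apply measurable_neg hA, hνsym]
    have hunion : (1 : ℝ≥0∞) ≤ ν {x : ℝ | 0 ≤ x} + ν {x : ℝ | x ≤ 0} := by
      calc (1 : ℝ≥0∞) = ν Set.univ := (measure_univ).symm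
        _ ≤ ν ({x : ℝ | 0 ≤ x} ∪ {x : ℝ | x ≤ 0}) := by
            apply measure_mono; intro x _; rcases le_total 0 x with h | h
            · exact Or.inl h
            · exact Or.inr h
        _ ≤ _ := measure_union_le _ _
    rw [hneg] at hunion
    have h2 : (1 : ℝ≥0∞) ≤ 2 * ν {x : ℝ | 0 ≤ x} := by
      rw [two_mul]; exact hunion
    have hhalf : (1/2 : ℝ≥0∞) ≤ ν {x : ℝ | 0 ≤ x} := by
      rw [ENNReal.div_le_iff_le_mul (by norm_num) (by norm_num)]
      rwa [mul_comm] at h2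
    have hfin : ν {x : ℝ | 0 ≤ x} ≠ ⊤ := measure_ne_top _ _
    have := ENNReal.toReal_mono hfin hhalf
    rw [hEq]
    simpa using this
  -- Step 2: sum bound
  have hsum : ∑ k ∈ Finset.Icc 1 N, ((Nat.choose N k : ℝ)) * (1/2 : ℝ)
      = (2 ^ N - 1) / 2 := by
    rw [← Finset.sum_mul]
    have h1 : ∑ k ∈ Finset.Icc 1 N, (Nat.choose N k : ℝ) = 2 ^ N - 1 := by
      have h0 : ∑ k ∈ Finset.range (N+1), (Nat.choose N k : ℝ) = 2 ^ N := by
        rw [← Nat.cast_sum]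
        rw [Nat.sum_range_choose]
        push_cast; ring
      have : Finset.range (N+1) = insert 0 (Finset.Icc 1 N) := by
        ext x; simp [Nat.lt_succ_iff, Nat.one_le_iff_ne_zero]; omega
      rw [this, Finset.sum_insert (by simp)] at h0
      simp at h0
      linarith
    rw [h1]; ring
  have step2 : (2 ^ N - 1 : ℝ) / 2 ≤ ∑ k ∈ Finset.Icc 1 N, (Nat.choose N k : ℝ) *
        (P {ω | 0 ≤ ∑ i ∈ Finset.range k, W i ω}).toReal := by
    rw [← hsum]
    apply Finset.sum_le_sum
    intro k _
    exact mul_le_mul_of_nonneg_left (key k) (Nat.cast_nonneg _)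
  -- Step 3: arithmetic
  have hNr : (1 : ℝ) ≤ N := by exact_mod_cast hN
  have hpi : (1 : ℝ) ≤ Real.pi * (N - 2/3) := by
    nlinarith [Real.pi_gt_three]
  have hsqrt : (1 : ℝ) ≤ Real.sqrt (Real.pi * (N - 2/3)) := by
    rw [show (1:ℝ) = Real.sqrt 1 by simp]
    exact Real.sqrt_le_sqrt hpi
  have hden : (2 : ℝ) ≤ 2 * N * Real.sqrt (Real.pi * (N - 2/3)) := by
    nlinarith
  have hpow : (0 : ℝ) ≤ 2 ^ N - 1 := by
    have : (1:ℝ) ≤ 2 ^ N := one_le_pow₀ (by norm_num)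
    linarith
  have step3 : (2 ^ N - 1 : ℝ) / (2 * N * Real.sqrt (Real.pi * (N - 2 / 3)))
      ≤ (2 ^ N - 1) / 2 := by
    exact div_le_div_of_nonneg_left hpow (by norm_num) hden
  linarith
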